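/- Let k ≥ 4, let v = σ(k−1) and λ = 1 − (1−v)/k. Suppose t ≥ 1 and 1 ≤ ℓ ≤ t satisfy t − ℓ ≥ k. Then, writing λ_j = λ^{j−1}, one has λ_ℓ · k/2 < λ_{ℓ+1} + λ_{ℓ+2} + ... + λ_t. -/

import Mathlib

noncomputable def sigmaInv (d : ℕ) : ℝ :=
  if d ≤ 8 then 2 ^ (d - 1) else 4 * ((d : ℝ) ^ 2 - 3 * d + 3)

noncomputable def sigmaWeyl (d : ℕ) : ℝ := (sigmaInv d)⁻¹

lemma sigmaWeyl_pos (d : ℕ) : 0 < sigmaWeyl d := by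
  rw [sigmaWeyl, sigmaInv]
  split_ifs with h
  · positivity
  · push_neg at h
    have : (9:ℝ) ≤ d := by exact_mod_cast h
    have : 0 < 4 * ((d : ℝ) ^ 2 - 3 * d + 3) := by nlinarith
    positivity

lemma sigmaWeyl_le (d : ℕ) (hd : 8 ≤ d) : sigmaWeyl d ≤ 1/128 := by
  rw [sigmaWeyl, sigmaInv]
  split_ifs with h
  · have : d = 8 := le_antisymm h hd
    subst this; norm_num
  · push_neg at h
    have h9 : (9:ℝ) ≤ d := by exact_mod_cast h
    have h128 : (128:ℝ) ≤ 4 * ((d : ℝ) ^ 2 - 3 * d + 3) := by nlinarith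
    rw [inv_le_iff_one_le_mul₀ (by linarith)]
    nlinarith

lemma sigmaWeyl_le_quarter (d : ℕ) (hd : 3 ≤ d) : sigmaWeyl d ≤ 1/4 := by
  rcases le_or_gt d 8 with h8 | h8
  · rw [sigmaWeyl, sigmaInv, if_pos h8]
    have h4 : (4:ℝ) ≤ 2 ^ (d - 1) := by
      calc (4:ℝ) = 2 ^ 2 := by norm_num
        _ ≤ 2 ^ (d - 1) := pow_le_pow_right₀ one_le_two (by omega)
    have := inv_anti₀ (by norm_num : (0:ℝ) < 4) h4
    linarith [this]
  · have := sigmaWeyl_le d (by omega)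
    linarith

lemma exp_bound : Real.exp (-(127/128)) < 7/16 := by
  have e1 : (1:ℝ) + 127/384 ≤ Real.exp (127/384) := by
    have := Real.add_one_le_exp (127/384 : ℝ); linarith
  have e2 : Real.exp ((127:ℝ)/128) = Real.exp (127/384) ^ 3 := by
    rw [← Real.exp_nat_mul]; norm_num
  have e3 : ((1:ℝ) + 127/384) ^ 3 ≤ Real.exp (127/384) ^ 3 :=
    pow_le_pow_left₀ (by norm_num) e1 3
  have e4 : (16:ℝ)/7 < Real.exp (127/128) := by
    rw [e2]; nlinarith [e3]
  rw [Real.exp_neg]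
  rw [inv_lt_iff_one_lt_mul₀ (Real.exp_pos _)]
  nlinarith [e4]

lemma key (k : ℕ) (hk : 4 ≤ k) (v lam : ℝ)
    (hv : v = sigmaWeyl (k - 1)) (hlam : lam = 1 - (1 - v) / k) :
    lam ^ (k + 1) < lam - (1 - v) / 2 := by
  rcases lt_or_ge k 9 with h9 | h9
  · interval_cases k <;>
      simp only [sigmaWeyl, sigmaInv] at hv <;> norm_num at hv <;> subst hv <;> subst hlam <;>
      norm_num
  · have hd : 8 ≤ k - 1 := by omega
    have hv0 : 0 < v := hv ▸ sigmaWeyl_pos _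
    have hv1 : v ≤ 1/128 := hv ▸ sigmaWeyl_le _ hd
    have hkR : (9:ℝ) ≤ k := by exact_mod_cast h9
    have hk0 : (0:ℝ) < k := by linarith
    set u := 1 - v with hu
    have hu1 : u < 1 := by simp [hu]; linarith
    have hu0 : 127/128 ≤ u := by simp [hu]; linarith
    have hlam1 : lam < 1 := by
      rw [hlam]
      have : 0 < u / k := by positivity
      linarith
    have hlamlb : 8/9 ≤ lam := by
      rw [hlam]
      have h1 : u / k ≤ 1 / 9 := by rw [div_le_iff₀ hk0]; nlinarith
      linarith
    have hlam0 : 0 < lam := by linarith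
    have s1 : lam ^ k ≤ Real.exp (-(u/k)) ^ k := by
      apply pow_le_pow_left₀ hlam0.le
      have := Real.add_one_le_exp (-(u/k))
      rw [hlam]; linarith
    have s2 : Real.exp (-(u/k)) ^ k = Real.exp (-u) := by
      rw [← Real.exp_nat_mul]
      congr 1
      field_simp
    have s3 : Real.exp (-u) ≤ Real.exp (-(127/128)) := by
      apply Real.exp_le_exp.mpr; linarith
    have s4 : lam ^ k < 7/16 := by
      calc lam ^ k ≤ Real.exp (-u) := by rw [← s2]; exact s1
        _ ≤ Real.exp (-(127/128)) := s3
        _ < 7/16 := exp_bound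
    have s5 : lam ^ (k+1) = lam ^ k * lam := pow_succ lam k
    nlinarith [s4, s5, hlam0, hlamlb, hu1]

theorem stmt_16 (k : ℕ) (hk : 4 ≤ k) (v lam : ℝ)
    (hv : v = sigmaWeyl (k - 1)) (hlam : lam = 1 - (1 - v) / k)
    (t ℓ : ℕ) (hℓ : 1 ≤ ℓ) (hℓt : ℓ ≤ t) (htℓ : k + ℓ ≤ t) :
    lam ^ (ℓ - 1) * k / 2 < ∑ j ∈ Finset.Icc (ℓ + 1) t, lam ^ (j - 1) := by
  have hkey := key k hk v lam hv hlam
  have hv0 : 0 < v := hv ▸ sigmaWeyl_pos _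
  have hvq : v ≤ 1/4 := hv ▸ sigmaWeyl_le_quarter _ (by omega)
  have hkR : (4:ℝ) ≤ k := by exact_mod_cast hk
  have hk0 : (0:ℝ) < k := by linarith
  have hlam1 : lam < 1 := by
    rw [hlam]
    have : 0 < (1 - v) / k := div_pos (by linarith) hk0
    linarith
  have hlam0 : 0 < lam := by
    rw [hlam]
    have h1 : (1 - v) / k ≤ 1 / 4 := by
      rw [div_le_div_iff₀ hk0 (by norm_num)]; nlinarith
    linarith
  have h1l : 0 < 1 - lam := by linarith
  -- rewrite the sum
  have hsum : ∑ j ∈ Finset.Icc (ℓ + 1) t, lam ^ (j - 1) = ∑ i ∈ Finset.Ico ℓ t, lam ^ i := by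
    rw [← Finset.Ico_add_one_right_eq_Icc, Finset.sum_Ico_eq_sum_range, Finset.sum_Ico_eq_sum_range]
    have h : t + 1 - (ℓ + 1) = t - ℓ := by omega
    rw [h]
    apply Finset.sum_congr rfl
    intro i _
    congr 1
    omega
  rw [hsum, geom_sum_Ico (ne_of_lt hlam1) hℓt]
  have hA : 0 < lam ^ (ℓ - 1) := pow_pos hlam0 _
  have hpt : lam ^ t = lam ^ (ℓ - 1) * lam ^ (t - ℓ + 1) := by
    rw [← pow_add]; congr 1; omega
  have hpl : lam ^ ℓ = lam ^ (ℓ - 1) * lam := by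
    rw [← pow_succ]; congr 1; omega
  have hle : lam ^ (t - ℓ + 1) ≤ lam ^ (k + 1) :=
    pow_le_pow_of_le_one hlam0.le hlam1.le (by omega)
  have h1 : 1 - v < 2 * (lam - lam ^ (t - ℓ + 1)) := by linarith
  have hflip : (lam ^ t - lam ^ ℓ) / (lam - 1) = (lam ^ ℓ - lam ^ t) / (1 - lam) := by
    rw [← neg_div_neg_eq]; ring_nf
  rw [hflip, lt_div_iff₀ h1l]
  have huk : (1 - lam) * k = 1 - v := by
    rw [hlam]; field_simp; ring
  rw [hpt, hpl]
  nlinarith [mul_lt_mul_of_pos_left h1 hA, huk, hA]
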